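/- Let R be an integral domain with involution and let (H₁, ρ₁), (H₂, ρ₂) be skew-Hermitian R-modules. Let Q be the fraction field of R and let ψ : Q ⊗_R H₁ → Q ⊗_R H₂ be a unitary Q-isomorphism, i.e. a Q-linear isomorphism with ρ₂(ψ(x), ψ(y)) = ρ₁(x, y) for all x, y, where ρᵢ denotes the extension of the form to Q ⊗_R Hᵢ. Then the restricted graph Γʳ_ψ = {(h₁, h₂) ∈ H₁ ⊕ H₂ : h₂ = ψ(h₁)} is a Lagrangian submodule of (H₁ ⊕ H₂, (−ρ₁) ⊕ ρ₂). -/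

import Mathlib

open TensorProduct

/-- A skew-Hermitian form on an `R`-module `H`, relative to an involution `σ` of `R`. -/
structure SHForm (R : Type) [CommRing R] (σ : R →+* R)
    (H : Type) [AddCommGroup H] [Module R H] : Type where
  form : H → H → R
  add_left : ∀ x x' y, form (x + x') y = form x y + form x' y
  smul_left : ∀ (r : R) (x y : H), form (r • x) y = r * form x y
  add_right : ∀ x y y', form x (y + y') = form x y + form x y'
  smul_right : ∀ (r : R) (x y : H), form x (r • y) = σ r * form x y
  skew : ∀ x y, form x y = - σ (form y x)
  nondeg : ∀ x, (∀ y, form x y = 0) → x = 0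

/-- A skew-Hermitian form together with its extension to the rationalization `Q ⊗[R] H`. -/
structure SHFormQ (R : Type) [CommRing R] (σ : R →+* R)
    (Q : Type) [CommRing Q] [Algebra R Q] (σQ : Q →+* Q)
    (H : Type) [AddCommGroup H] [Module R H] extends SHForm R σ H where
  formQ : Q ⊗[R] H → Q ⊗[R] H → Q
  formQ_add_left : ∀ x x' y, formQ (x + x') y = formQ x y + formQ x' y
  formQ_smul_left : ∀ (q : Q) x y, formQ (q • x) y = q * formQ x y
  formQ_add_right : ∀ x y y', formQ x (y + y') = formQ x y + formQ x y'
  formQ_smul_right : ∀ (q : Q) x y, formQ x (q • y) = σQ q * formQ x y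
  formQ_skew : ∀ x y, formQ x y = - σQ (formQ y x)
  formQ_compat : ∀ x y : H,
    formQ ((1 : Q) ⊗ₜ[R] x) ((1 : Q) ⊗ₜ[R] y) = algebraMap R Q (form x y)

/-- the restricted graph of a unitary `Q`-isomorphism between the
rationalizations of two skew-Hermitian `R`-modules is a Lagrangian submodule of
`(H₁ ⊕ H₂, (−ρ₁) ⊕ ρ₂)`. -/
lemma rep_lemma (R : Type) [CommRing R] [IsDomain R]
    (Q : Type) [Field Q] [Algebra R Q] [IsFractionRing R Q]
    (H : Type) [AddCommGroup H] [Module R H] (z : Q ⊗[R] H) :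
    ∃ (d : R) (h : H), d ≠ 0 ∧ z = (algebraMap R Q d)⁻¹ • ((1 : Q) ⊗ₜ[R] h) := by
  induction z using TensorProduct.induction_on with
  | zero => exact ⟨1, 0, one_ne_zero, by simp⟩
  | tmul q h =>
      obtain ⟨r, d, hd, hq⟩ := IsFractionRing.div_surjective (A := R) q
      refine ⟨d, r • h, nonZeroDivisors.ne_zero hd, ?_⟩
      rw [TensorProduct.tmul_smul, ← algebraMap_smul Q r, smul_comm, smul_smul,
        TensorProduct.smul_tmul', smul_eq_mul, mul_one, ← hq, div_eq_mul_inv, mul_comm]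
  | add a b ha hb =>
      obtain ⟨d₁, h₁, hd₁, r₁⟩ := ha
      obtain ⟨d₂, h₂, hd₂, r₂⟩ := hb
      refine ⟨d₁ * d₂, d₂ • h₁ + d₁ • h₂, mul_ne_zero hd₁ hd₂, ?_⟩
      have e₁ : algebraMap R Q d₁ ≠ 0 := fun h => hd₁ (IsFractionRing.injective R Q (by simpa using h))
      have e₂ : algebraMap R Q d₂ ≠ 0 := fun h => hd₂ (IsFractionRing.injective R Q (by simpa using h))
      have c₁ : (algebraMap R Q (d₁ * d₂))⁻¹ * algebraMap R Q d₂ = (algebraMap R Q d₁)⁻¹ := by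
        rw [map_mul]; field_simp
      have c₂ : (algebraMap R Q (d₁ * d₂))⁻¹ * algebraMap R Q d₁ = (algebraMap R Q d₂)⁻¹ := by
        rw [map_mul]; field_simp
      rw [r₁, r₂, TensorProduct.tmul_add, TensorProduct.tmul_smul, TensorProduct.tmul_smul,
        ← algebraMap_smul Q d₂ ((1:Q) ⊗ₜ[R] h₁), ← algebraMap_smul Q d₁ ((1:Q) ⊗ₜ[R] h₂),
        smul_add, smul_smul, smul_smul, c₁, c₂]

theorem stmt7 (R : Type) [CommRing R] [IsDomain R]
    (σ : R →+* R) (hσ : ∀ r, σ (σ r) = r)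
    (Q : Type) [Field Q] [Algebra R Q] [IsFractionRing R Q]
    (σQ : Q →+* Q) (hσQ : ∀ q, σQ (σQ q) = q)
    (hσQc : ∀ r : R, σQ (algebraMap R Q r) = algebraMap R Q (σ r))
    (H₁ H₂ : Type) [AddCommGroup H₁] [Module R H₁] [Module.Finite R H₁]
    [AddCommGroup H₂] [Module R H₂] [Module.Finite R H₂]
    (F₁ : SHFormQ R σ Q σQ H₁) (F₂ : SHFormQ R σ Q σQ H₂)
    (ψ : (Q ⊗[R] H₁) ≃ₗ[Q] (Q ⊗[R] H₂))
    (hψ : ∀ x y : Q ⊗[R] H₁, F₂.formQ (ψ x) (ψ y) = F₁.formQ x y) :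
    let Γ : Set (H₁ × H₂) :=
      {p | (1 : Q) ⊗ₜ[R] p.2 = ψ ((1 : Q) ⊗ₜ[R] p.1)}
    ∀ x : H₁ × H₂, x ∈ Γ ↔ ∀ y ∈ Γ, - F₁.form x.1 y.1 + F₂.form x.2 y.2 = 0 := by
  intro Γ x
  have injQ : Function.Injective (algebraMap R Q) := IsFractionRing.injective R Q
  have sub_left : ∀ a b w, F₂.formQ (a - b) w = F₂.formQ a w - F₂.formQ b w := by
    intro a b w
    have : a - b = a + (-1 : Q) • b := by rw [sub_eq_add_neg]; congr 1; exact (neg_one_smul Q b).symm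
    rw [this, F₂.formQ_add_left, F₂.formQ_smul_left]; ring
  constructor
  · intro hx y hy
    have hx' : (1 : Q) ⊗ₜ[R] x.2 = ψ ((1 : Q) ⊗ₜ[R] x.1) := hx
    have hy' : (1 : Q) ⊗ₜ[R] y.2 = ψ ((1 : Q) ⊗ₜ[R] y.1) := hy
    have h2 : F₂.formQ ((1:Q) ⊗ₜ[R] x.2) ((1:Q) ⊗ₜ[R] y.2)
        = F₁.formQ ((1:Q) ⊗ₜ[R] x.1) ((1:Q) ⊗ₜ[R] y.1) := by
      rw [hx', hy', hψ]
    rw [F₂.formQ_compat, F₁.formQ_compat] at h2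
    rw [injQ h2]; ring
  · intro hx
    set z := (1:Q) ⊗ₜ[R] x.2 - ψ ((1:Q) ⊗ₜ[R] x.1) with hzdef
    have key : ∀ k : H₂, F₂.formQ z ((1:Q) ⊗ₜ[R] k) = 0 := by
      intro k
      obtain ⟨e, h₁, he, hrep⟩ := rep_lemma R Q H₁ (ψ.symm ((1:Q) ⊗ₜ[R] k))
      have eQ : algebraMap R Q e ≠ 0 := fun h => he (injQ (by simpa using h))
      have hmem : (1 : Q) ⊗ₜ[R] (e • k) = ψ ((1 : Q) ⊗ₜ[R] h₁) := by
        have h1 : (1:Q) ⊗ₜ[R] h₁ = algebraMap R Q e • ψ.symm ((1:Q) ⊗ₜ[R] k) := by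
          rw [hrep, smul_smul, mul_inv_cancel₀ eQ, one_smul]
        rw [h1, map_smul, ψ.apply_symm_apply, algebraMap_smul, TensorProduct.tmul_smul]
      have hy := hx (h₁, e • k) hmem
      have calc1 : F₂.formQ z ((1:Q) ⊗ₜ[R] (e • k)) = 0 := by
        have t1 := F₂.formQ_compat x.2 (e • k)
        have t2 : F₂.formQ (ψ ((1:Q) ⊗ₜ[R] x.1)) ((1:Q) ⊗ₜ[R] (e • k))
            = algebraMap R Q (F₁.form x.1 h₁) := by
          rw [hmem, hψ, F₁.formQ_compat]
        rw [hzdef, sub_left, t1, t2, ← map_sub]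
        have hr : F₂.form x.2 (e • k) - F₁.form x.1 h₁ = 0 := by
          linear_combination hy
        rw [hr, map_zero]
      have calc2 : F₂.formQ z ((1:Q) ⊗ₜ[R] (e • k))
          = algebraMap R Q (σ e) * F₂.formQ z ((1:Q) ⊗ₜ[R] k) := by
        rw [TensorProduct.tmul_smul, ← algebraMap_smul Q e ((1:Q) ⊗ₜ[R] k),
          F₂.formQ_smul_right, hσQc]
      rw [calc2] at calc1
      rcases mul_eq_zero.mp calc1 with h | h
      · exfalso
        apply eQ
        have : σ e = 0 := by
          apply injQ; simpa using h
        have := hσ e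
        rw [‹σ e = 0›, map_zero] at this
        rw [← this, map_zero]
      · exact h
    have hz0 : z = 0 := by
      obtain ⟨d, h, hd, hrep⟩ := rep_lemma R Q H₂ z
      have dQ : algebraMap R Q d ≠ 0 := fun hh => hd (injQ (by simpa using hh))
      have hzero : h = 0 := by
        apply F₂.nondeg
        intro k
        have := key k
        rw [hrep, F₂.formQ_smul_left, F₂.formQ_compat] at this
        rcases mul_eq_zero.mp this with h' | h'
        · exact absurd h' (inv_ne_zero dQ)
        · exact injQ (by simpa using h')
      rw [hrep, hzero]; simp
    have := sub_eq_zero.mp hz0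
    exact this
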